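/- Let n = 3 and suppose the vector s ∈ ℤ^{q²−1} has the special form s = (s_1,…,s_1, s_2,…,s_2, …, s_{q−1},…,s_{q−1}), where each value s_1,…,s_{q−1} is repeated q+1 times. Then the cardinality #Ω_{r,s,t} is symmetric with respect to r_0, r_1, …, r_{q−1}, t; that is, writing r_q := t and r'_q := t', if the sequence (r'_0,…,r'_q) is a permutation of the sequence (r_0,…,r_q), then #Ω_{(r_0,…,r_{q−1}),s,t} = #Ω_{(r'_0,…,r'_{q−1}),s,t'}. -/

import Mathlib

/-- The lattice point set `Ω_{r,s,t}` associated with the GGS curve: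
triples `(i, j, k)` with `i + r 0 ≥ 0`, `0 ≤ i + m(q+1) j_μ + r_μ < m(q+1)` for
`μ = 1, …, q-1`, `0 ≤ i + m k_ν + s_ν < m` for `ν = 1, …, q²-1`, and
`q³ i + m(q+1)|j| + m q |k| ≤ t`. -/
def OmegaSet (q : ℕ) (hq : 0 < q) (m : ℤ) (r : Fin q → ℤ) (s : Fin (q ^ 2 - 1) → ℤ)
    (t : ℤ) : Set (ℤ × (Fin (q - 1) → ℤ) × (Fin (q ^ 2 - 1) → ℤ)) :=
  {p | 0 ≤ p.1 + r ⟨0, hq⟩ ∧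
    (∀ μ : Fin (q - 1),
      0 ≤ p.1 + m * ((q : ℤ) + 1) * p.2.1 μ + r ⟨μ.val + 1, by have := μ.isLt; omega⟩ ∧
      p.1 + m * ((q : ℤ) + 1) * p.2.1 μ + r ⟨μ.val + 1, by have := μ.isLt; omega⟩
        < m * ((q : ℤ) + 1)) ∧
    (∀ ν : Fin (q ^ 2 - 1), 0 ≤ p.1 + m * p.2.2 ν + s ν ∧ p.1 + m * p.2.2 ν + s ν < m) ∧
    (q : ℤ) ^ 3 * p.1 + m * ((q : ℤ) + 1) * (∑ μ, p.2.1 μ)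
      + m * (q : ℤ) * (∑ ν, p.2.2 ν) ≤ t}


private lemma aux1 {M a u : ℤ} (hM : 0 < M) : 0 ≤ M * u + a ↔ -(a / M) ≤ u := by
  have h1 := Int.emod_nonneg a hM.ne'
  have h2 := Int.emod_lt_of_pos a hM
  have h3 := Int.mul_ediv_add_emod a M
  constructor
  · intro h
    by_contra hlt
    push_neg at hlt
    have hle : u + a / M ≤ -1 := by omega
    nlinarith [mul_le_mul_of_nonneg_left hle hM.le]
  · intro h
    nlinarith [mul_nonneg hM.le (by omega : (0:ℤ) ≤ u + a / M)]

private lemma aux2 {M u v w : ℤ} (hM : 0 < M) (h0 : 0 ≤ w) (h1 : w < M) :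
    M * u ≤ M * v + w ↔ u ≤ v := by
  constructor
  · intro h
    by_contra hlt
    push_neg at hlt
    have : v + 1 ≤ u := by omega
    nlinarith [mul_le_mul_of_nonneg_left this hM.le]
  · intro h
    nlinarith [mul_le_mul_of_nonneg_left h hM.le]

private lemma box_unique {M a : ℤ} (hM : 0 < M) {j : ℤ} (h1 : 0 ≤ a + M * j)
    (h2 : a + M * j < M) : j = -(a / M) := by
  have h3 : (a + M * j) % M = a + M * j := Int.emod_eq_of_lt h1 h2
  have h4 : (a + M * j) % M = a % M := Int.add_mul_emod_self_left a M j
  have h5 := Int.mul_ediv_add_emod a M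
  have h6 : M * j = M * (-(a / M)) := by linarith
  exact mul_left_cancel₀ hM.ne' h6

private lemma block_sum {q : ℕ} (hq : 2 ≤ q) (sv : Fin (q-1) → ℤ) (s : Fin (q^2-1) → ℤ)
    (hs : ∀ (μ : Fin (q - 1)) (d : Fin (q + 1)) (h : μ.val * (q + 1) + d.val < q ^ 2 - 1),
      s ⟨μ.val * (q + 1) + d.val, h⟩ = sv μ) (f : ℤ → ℤ) :
    ∑ ν : Fin (q^2-1), f (s ν) = ((q:ℤ) + 1) * ∑ μ : Fin (q-1), f (sv μ) := by
  have hqq : (q-1) * (q+1) = q^2 - 1 := by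
    obtain ⟨k, rfl⟩ : ∃ k, q = k + 2 := ⟨q - 2, by omega⟩
    have h : (k+2)^2 = (k+2-1) * (k+2+1) + 1 := by
      rw [show k+2-1 = k+1 from rfl]
      ring
    omega
  have key : ∀ p : Fin (q-1) × Fin (q+1),
      f (s (finCongr hqq (finProdFinEquiv p))) = f (sv p.1) := by
    intro p
    have hlt : p.1.val * (q + 1) + p.2.val < q ^ 2 - 1 := by
      rw [← hqq]
      have h1 : p.1.val + 1 ≤ q - 1 := p.1.isLt
      calc p.1.val * (q+1) + p.2.val < p.1.val * (q+1) + (q+1) := by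
            exact Nat.add_lt_add_left p.2.isLt _
        _ = (p.1.val + 1) * (q+1) := by ring
        _ ≤ (q-1) * (q+1) := Nat.mul_le_mul_right _ h1
    have heq : (finCongr hqq (finProdFinEquiv p)) = (⟨p.1.val * (q+1) + p.2.val, hlt⟩ : Fin (q^2-1)) := by
      ext
      simp [finProdFinEquiv, Fin.val_mk]
      ring
    rw [heq, hs p.1 p.2 hlt]
  calc ∑ ν : Fin (q^2-1), f (s ν)
      = ∑ p : Fin (q-1) × Fin (q+1), f (s (finCongr hqq (finProdFinEquiv p))) := by
        exact (Equiv.sum_comp (finProdFinEquiv.trans (finCongr hqq)) (fun ν => f (s ν))).symm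
    _ = ∑ p : Fin (q-1) × Fin (q+1), f (sv p.1) := Finset.sum_congr rfl (fun p _ => key p)
    _ = ((q:ℤ)+1) * ∑ μ : Fin (q-1), f (sv μ) := by
        rw [Fintype.sum_prod_type]
        simp [Finset.sum_const]
        exact (Finset.mul_sum _ _ _).symm

private lemma snoc_sum {q : ℕ} (hq : 0 < q) (r : Fin q → ℤ) (t : ℤ) (f : ℤ → ℤ) :
    ∑ a : Fin (q+1), f ((Fin.snoc r t : Fin (q+1) → ℤ) a)
      = f (r ⟨0, hq⟩) + (∑ μ : Fin (q-1), f (r ⟨μ.val+1, by have := μ.isLt; omega⟩)) + f t := by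
  rw [Fin.sum_univ_castSucc]
  simp only [Fin.snoc_castSucc, Fin.snoc_last]
  congr 1
  obtain ⟨k, rfl⟩ : ∃ k, q = k + 1 := ⟨q - 1, by omega⟩
  rw [Fin.sum_univ_succ]
  rfl

private def Dfun (q : ℕ) (m : ℤ) (sv : Fin (q - 1) → ℤ) (ρ : Fin (q + 1) → ℤ) (c : ℤ) : ℤ :=
  -c + (∑ a, (c + ρ a) / ((q : ℤ) ^ 3 + 1)) + (q : ℤ) * ∑ μ, (c + sv μ) / m

private lemma omega_card (q : ℕ) (hq2 : 2 ≤ q) (m : ℤ)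
    (hm : m * ((q : ℤ) + 1) = (q : ℤ) ^ 3 + 1)
    (sv : Fin (q - 1) → ℤ) (s : Fin (q ^ 2 - 1) → ℤ)
    (hs : ∀ (μ : Fin (q - 1)) (d : Fin (q + 1)) (h : μ.val * (q + 1) + d.val < q ^ 2 - 1),
      s ⟨μ.val * (q + 1) + d.val, h⟩ = sv μ)
    (hq : 0 < q) (r : Fin q → ℤ) (t : ℤ) :
    (OmegaSet q hq m r s t).ncard
      = ∑ c ∈ Finset.Ico (0 : ℤ) ((q : ℤ) ^ 3 + 1),
          (Dfun q m sv (Fin.snoc r t) c + 1).toNat := by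
  have hQ2 : (2:ℤ) ≤ (q:ℤ) := by exact_mod_cast hq2
  set Q : ℤ := (q:ℤ) with hQdef
  have hM : (0:ℤ) < Q^3 + 1 := by positivity
  have hm0 : (0:ℤ) < m := by nlinarith
  set M : ℤ := Q^3 + 1 with hMdef
  set r0 : ℤ := r ⟨0, hq⟩ with hr0
  set r1 : Fin (q-1) → ℤ := fun μ => r ⟨μ.val + 1, by have := μ.isLt; omega⟩ with hr1
  set φ : ℤ → (ℤ × (Fin (q-1) → ℤ) × (Fin (q^2-1) → ℤ)) :=
    fun i => (i, fun μ => -((i + r1 μ)/M), fun ν => -((i + s ν)/m)) with hφ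
  set W : ℤ → ℤ := fun i =>
    Q^3*i + m*(Q+1)*(∑ μ, -((i + r1 μ)/M)) + m*Q*(∑ ν, -((i + s ν)/m)) with hW
  set Iset : Set ℤ := {i | 0 ≤ i + r0 ∧ W i ≤ t} with hIset
  -- membership characterization
  have hiff : ∀ i : ℤ, φ i ∈ OmegaSet q hq m r s t ↔ i ∈ Iset := by
    intro i
    constructor
    · rintro ⟨h1, _, _, h4⟩
      exact ⟨h1, h4⟩
    · rintro ⟨h1, h4⟩
      refine ⟨h1, fun μ => ?_, fun ν => ?_, h4⟩
      · have he : i + m * (Q + 1) * -((i + r1 μ)/M) + r1 μ = (i + r1 μ) % M := by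
          rw [Int.emod_def, hm]
          ring
        constructor
        · rw [show (φ i).1 + m * (Q + 1) * (φ i).2.1 μ + r ⟨μ.val + 1, by have := μ.isLt; omega⟩
              = i + m * (Q + 1) * -((i + r1 μ)/M) + r1 μ from rfl, he]
          exact Int.emod_nonneg _ hM.ne'
        · rw [show (φ i).1 + m * (Q + 1) * (φ i).2.1 μ + r ⟨μ.val + 1, by have := μ.isLt; omega⟩
              = i + m * (Q + 1) * -((i + r1 μ)/M) + r1 μ from rfl, he, hm]
          exact Int.emod_lt_of_pos _ hM
      · have he : i + m * -((i + s ν)/m) + s ν = (i + s ν) % m := by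
          rw [Int.emod_def]
          ring
        refine ⟨?_, ?_⟩
        · rw [show (φ i).1 + m * (φ i).2.2 ν + s ν = i + m * -((i + s ν)/m) + s ν from rfl, he]
          exact Int.emod_nonneg _ hm0.ne'
        · rw [show (φ i).1 + m * (φ i).2.2 ν + s ν = i + m * -((i + s ν)/m) + s ν from rfl, he]
          exact Int.emod_lt_of_pos _ hm0
  -- every point of Omega is of the form φ i
  have hpeq : ∀ p ∈ OmegaSet q hq m r s t, p = φ p.1 := by
    rintro ⟨i, j, k⟩ ⟨_, h2, h3, _⟩
    have hj : j = fun μ => -((i + r1 μ)/M) := by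
      funext μ
      obtain ⟨ha, hb⟩ := h2 μ
      refine box_unique hM (a := i + r1 μ) ?_ ?_
      · rw [show i + r1 μ + M * j μ = i + m * (Q+1) * j μ + r1 μ by rw [← hm]; ring]
        exact ha
      · rw [show i + r1 μ + M * j μ = i + m * (Q+1) * j μ + r1 μ by rw [← hm]; ring, hm] at *
        exact (by rw [← hm]; exact hb)
    have hk : k = fun ν => -((i + s ν)/m) := by
      funext ν
      obtain ⟨ha, hb⟩ := h3 ν
      refine box_unique hm0 (a := i + s ν) ?_ ?_
      · rw [show i + s ν + m * k ν = i + m * k ν + s ν by ring]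
        exact ha
      · rw [show i + s ν + m * k ν = i + m * k ν + s ν by ring]
        exact hb
    simp only [hφ]
    rw [hj, hk]
  have himg : OmegaSet q hq m r s t = φ '' Iset := by
    ext p
    constructor
    · intro hp
      exact ⟨p.1, (hiff p.1).mp ((hpeq p hp) ▸ hp), ((hpeq p hp)).symm⟩
    · rintro ⟨i, hi, rfl⟩
      exact (hiff i).mpr hi
  have hinj : Function.Injective φ := fun a b h => congrArg Prod.fst h
  rw [himg, Set.ncard_image_of_injective _ hinj]
  -- sums of divisions at a fixed residue
  set S1 : ℤ → ℤ := fun c => ∑ μ, ((c + r1 μ)/M) with hS1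
  set S2 : ℤ → ℤ := fun c => ∑ μ : Fin (q-1), ((c + sv μ)/m) with hS2
  have hcast : ((q - 1 : ℕ) : ℤ) = Q - 1 := by
    rw [Nat.cast_sub (by omega : 1 ≤ q)]
    simp [hQdef]
  -- the key identity for W on the class of c
  have key : ∀ u c : ℤ, W (M*u + c) = M*u + (Q^3*c - M * S1 c - Q*M*S2 c) := by
    intro u c
    have h1 : (∑ μ : Fin (q-1), -((M*u + c + r1 μ)/M)) = -S1 c - (Q-1) * u := by
      have hterm : ∀ μ : Fin (q-1), -((M*u + c + r1 μ)/M) = -((c + r1 μ)/M) + -u := by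
        intro μ
        rw [show M*u + c + r1 μ = (c + r1 μ) + u*M by ring,
          Int.add_mul_ediv_right _ _ hM.ne']
        ring
      rw [Finset.sum_congr rfl (fun μ _ => hterm μ), Finset.sum_add_distrib,
        Finset.sum_const, Finset.card_univ, Fintype.card_fin, ← Finset.sum_neg_distrib]
      rw [nsmul_eq_mul, hcast]
      ring
    have h2 : (∑ ν : Fin (q^2-1), -((M*u + c + s ν)/m))
        = (Q+1) * (-S2 c - ((Q+1) * u) * (Q-1)) := by
      rw [block_sum hq2 sv s hs (fun x => -((M*u + c + x)/m))]
      have hterm : ∀ μ : Fin (q-1), -((M*u + c + sv μ)/m) = -((c + sv μ)/m) + -((Q+1)*u) := by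
        intro μ
        rw [show M*u + c + sv μ = (c + sv μ) + ((Q+1)*u)*m by rw [← hm]; ring,
          Int.add_mul_ediv_right _ _ hm0.ne']
        ring
      rw [Finset.sum_congr rfl (fun μ _ => hterm μ), Finset.sum_add_distrib,
        Finset.sum_const, Finset.card_univ, Fintype.card_fin, ← Finset.sum_neg_distrib]
      rw [nsmul_eq_mul, hcast]
      ring
    simp only [hW]
    rw [h1, h2]
    linear_combination (-(S1 c) - Q * S2 c - (Q-1)*u - Q*(Q^2-1)*u) * hm
  -- the upper bound rewritten via Dfun
  have hsnoc : ∀ c : ℤ, (∑ a : Fin (q+1), (c + (Fin.snoc r t : Fin (q+1) → ℤ) a)/M)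
      = (c + r0)/M + S1 c + (c + t)/M := fun c => snoc_sum hq r t (fun x => (c + x)/M)
  have hDfun : ∀ c : ℤ, Dfun q m sv (Fin.snoc r t) c
      = -c + ((c + r0)/M + S1 c + (c + t)/M) + Q * S2 c := by
    intro c
    rw [show Dfun q m sv (Fin.snoc r t) c
      = -c + (∑ a : Fin (q+1), (c + (Fin.snoc r t : Fin (q+1) → ℤ) a)/M) + Q * S2 c from rfl,
      hsnoc c]
  have hDL : ∀ c : ℤ, t - (Q^3*c - M * S1 c - Q*M*S2 c)
      = M*(Dfun q m sv (Fin.snoc r t) c + -((c + r0)/M)) + (c+t) % M := by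
    intro c
    have hde := Int.mul_ediv_add_emod (c+t) M
    rw [hDfun c]
    linear_combination (-1 : ℤ) * hde + c * hMdef
  -- the per-class equivalence
  have core : ∀ c u : ℤ, 0 ≤ c → c < M →
      ((M*u + c) ∈ Iset ↔ (-((c + r0)/M) ≤ u ∧
        u ≤ Dfun q m sv (Fin.snoc r t) c + -((c + r0)/M))) := by
    intro c u hc0 hc1
    have e1 : (0 ≤ M*u + c + r0) ↔ -((c + r0)/M) ≤ u := by
      rw [show M*u + c + r0 = M*u + (c + r0) by ring]
      exact aux1 hM
    have e2 : W (M*u + c) ≤ t ↔ u ≤ Dfun q m sv (Fin.snoc r t) c + -((c + r0)/M) := by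
      rw [key u c, show (M*u + (Q^3*c - M * S1 c - Q*M*S2 c) ≤ t)
          ↔ (M*u ≤ t - (Q^3*c - M * S1 c - Q*M*S2 c)) from by constructor <;> intro <;> linarith,
        hDL c]
      exact aux2 hM (Int.emod_nonneg _ hM.ne') (Int.emod_lt_of_pos _ hM)
    exact and_congr e1 e2
  -- the finset
  set F : Finset ℤ := (Finset.Ico (0:ℤ) M).biUnion
    (fun c => (Finset.Icc (-((c + r0)/M))
      (Dfun q m sv (Fin.snoc r t) c + -((c + r0)/M))).image (fun u => M*u + c)) with hF
  have hIF : Iset = ↑F := by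
    ext i
    simp only [hF, Finset.coe_biUnion, Set.mem_iUnion, Finset.mem_coe, Finset.mem_biUnion,
      Finset.mem_image, Finset.mem_Icc, Finset.mem_Ico]
    constructor
    · intro hi
      have hrep : M*(i/M) + i % M = i := Int.mul_ediv_add_emod i M
      refine ⟨i % M, ⟨Int.emod_nonneg i hM.ne', Int.emod_lt_of_pos i hM⟩, i / M, ?_, hrep⟩
      exact (core (i % M) (i / M) (Int.emod_nonneg i hM.ne') (Int.emod_lt_of_pos i hM)).mp
        (by rw [hrep]; exact hi)
    · rintro ⟨c, hc, u, hu, rfl⟩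
      exact (core c u hc.1 hc.2).mpr hu
  rw [hIF, Set.ncard_coe_finset, hF]
  rw [Finset.card_biUnion]
  · apply Finset.sum_congr rfl
    intro c _
    rw [Finset.card_image_of_injective _ (fun a b h => by
      have : M * a = M * b := by linarith [h]
      exact mul_left_cancel₀ hM.ne' this)]
    rw [Int.card_Icc]
    congr 1
    ring
  · intro c1 h1 c2 h2 hne
    rw [Function.onFun, Finset.disjoint_left]
    rintro x hx1 hx2
    rw [Finset.mem_image] at hx1 hx2
    obtain ⟨u1, _, e1⟩ := hx1
    obtain ⟨u2, _, e2⟩ := hx2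
    rw [Finset.mem_coe, Finset.mem_Ico] at h1 h2
    have f1 : x % M = c1 := by
      rw [← e1, show M*u1 + c1 = c1 + M*u1 by ring, Int.add_mul_emod_self_left,
        Int.emod_eq_of_lt h1.1 h1.2]
    have f2 : x % M = c2 := by
      rw [← e2, show M*u2 + c2 = c2 + M*u2 by ring, Int.add_mul_emod_self_left,
        Int.emod_eq_of_lt h2.1 h2.2]
    exact hne (by rw [← f1, f2])

/-- For `n = 3` and `s` of the special block form where each of the values
`sv 0, …, sv (q-2)` is repeated `q+1` times, the cardinality `#Ω_{r,s,t}` is symmetric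
with respect to `r₀, r₁, …, r_(q-1), t`: writing `r_q := t` and `r'_q := t'`, if
`(r'_0, …, r'_q)` is a permutation of `(r_0, …, r_q)`, then
`#Ω_{r,s,t} = #Ω_{r',s,t'}`. -/
theorem card_OmegaSet_symm_t (q : ℕ) (hq : IsPrimePow q)
    (m : ℤ) (hm : m * ((q : ℤ) + 1) = (q : ℤ) ^ 3 + 1)
    (sv : Fin (q - 1) → ℤ) (s : Fin (q ^ 2 - 1) → ℤ)
    (hs : ∀ (μ : Fin (q - 1)) (d : Fin (q + 1)) (h : μ.val * (q + 1) + d.val < q ^ 2 - 1),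
      s ⟨μ.val * (q + 1) + d.val, h⟩ = sv μ)
    (r r' : Fin q → ℤ) (t t' : ℤ)
    (σ : Equiv.Perm (Fin (q + 1)))
    (hperm : (Fin.snoc r' t' : Fin (q + 1) → ℤ) = (Fin.snoc r t : Fin (q + 1) → ℤ) ∘ σ) :
    (OmegaSet q hq.pos m r s t).ncard = (OmegaSet q hq.pos m r' s t').ncard := by
  rw [omega_card q hq.two_le m hm sv s hs hq.pos r t,
      omega_card q hq.two_le m hm sv s hs hq.pos r' t']
  apply Finset.sum_congr rfl
  intro c _
  have hsum : ∑ a : Fin (q+1), (c + (Fin.snoc r' t' : Fin (q+1) → ℤ) a)/((q:ℤ)^3+1)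
      = ∑ a : Fin (q+1), (c + (Fin.snoc r t : Fin (q+1) → ℤ) a)/((q:ℤ)^3+1) := by
    rw [hperm]
    exact Equiv.sum_comp σ (fun a => (c + (Fin.snoc r t : Fin (q+1) → ℤ) a)/((q:ℤ)^3+1))
  simp only [Dfun, hsum]
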